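/- Let A₁, ..., A_k be real symmetric matrices and B ⊆ {0,1}^k. Suppose (i) for every index i there is a unique i⁻ such that the spectrum of A_{i⁻} equals the negative of the spectrum of A_i (as multisets), (ii) for each β ∈ B there is a unique β' ∈ B with {j : β'_j = 1} = {i⁻ : β_i = 1}, and (iii) the polynomial p(x₁,...,x_k) = Σ_{β∈B} x₁^{β₁}⋯x_k^{β_k} is odd (p(−x) = −p(x)). Then the matrix M = Σ_{β∈B} A₁^{⊗β₁} ⊗ ⋯ ⊗ A_k^{⊗β_k} has a symmetric spectrum. -/
import Mathlib
open Polynomial Matrix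

lemma count_map_univ {α γ : Type*} [Fintype α] [DecidableEq γ] (g : α → γ) (c : γ) :
    Multiset.count c (Multiset.map g Finset.univ.val) = Fintype.card {x // c = g x} := by
  classical
  rw [Multiset.count_map, Fintype.card_subtype]
  rfl

lemma map_pi_univ_eq {k : ℕ} {n m : Fin k → ℕ}
    (a : ∀ j, Fin (n j) → ℝ) (b : ∀ j, Fin (m j) → ℝ)
    (h : ∀ j, (Finset.univ.val.map (a j)) = Finset.univ.val.map (b j)) :
    (Finset.univ.val.map (fun w : ∀ j, Fin (n j) => fun j => a j (w j)))
      = Finset.univ.val.map (fun w : ∀ j, Fin (m j) => fun j => b j (w j)) := by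
  classical
  have key : ∀ (N : Fin k → ℕ) (c : ∀ j, Fin (N j) → ℝ) (t : Fin k → ℝ),
      Multiset.count t (Finset.univ.val.map (fun w : ∀ j, Fin (N j) => fun j => c j (w j)))
        = ∏ j, Multiset.count (t j) (Finset.univ.val.map (c j)) := by
    intro N c t
    rw [count_map_univ]
    have e1 : {w : ∀ j, Fin (N j) // t = fun j => c j (w j)}
        ≃ ∀ j, {x : Fin (N j) // t j = c j x} :=
      (Equiv.subtypeEquivRight (fun w => by rw [funext_iff])).trans Equiv.subtypePiEquivPi
    rw [Fintype.card_congr e1, Fintype.card_pi]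
    exact Finset.prod_congr rfl (fun j _ => (count_map_univ (c j) (t j)).symm)
  ext t
  rw [key, key]
  exact Finset.prod_congr rfl fun j _ => by rw [h j]

lemma charmatrix_eq {n : Type*} [DecidableEq n] [Fintype n] (M : Matrix n n ℝ) :
    charmatrix M = Matrix.diagonal (fun _ => (X : ℝ[X])) - M.map C := by
  refine Matrix.ext fun i j => ?_
  rw [charmatrix_apply, Matrix.sub_apply, Matrix.map_apply]

lemma charpoly_conj_aux {n : Type*} [DecidableEq n] [Fintype n]
    (S D T : Matrix n n ℝ) (hST : S * T = 1) :
    (S * D * T).charpoly = D.charpoly := by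
  have hmapST : (S.map (C : ℝ →+* ℝ[X])) * (T.map C) = 1 := by
    rw [← Matrix.map_mul, hST, Matrix.map_one _ (map_zero C) (map_one C)]
  have h2 : ∀ (Y : Matrix n n ℝ),
      Y.map (C : ℝ →+* ℝ[X]) * Matrix.diagonal (fun _ => (X : ℝ[X]))
        = Matrix.diagonal (fun _ => (X : ℝ[X])) * Y.map C := by
    intro Y; refine Matrix.ext fun i j => ?_; rw [Matrix.mul_diagonal, Matrix.diagonal_mul, mul_comm]
  have e1 : charmatrix (S * D * T) = S.map C * charmatrix D * T.map C := by
    rw [charmatrix_eq, charmatrix_eq]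
    rw [Matrix.mul_sub, Matrix.sub_mul, h2 S, Matrix.mul_assoc _ (S.map C) (T.map C), hmapST,
      Matrix.mul_one, Matrix.map_mul, Matrix.map_mul]
  rw [Matrix.charpoly, Matrix.charpoly, e1, Matrix.det_mul, Matrix.det_mul, mul_right_comm,
    ← Matrix.det_mul, hmapST, Matrix.det_one, one_mul]

lemma roots_charpoly_diagonal {n : Type*} [DecidableEq n] [Fintype n] (d : n → ℝ) :
    (Matrix.diagonal d).charpoly.roots = Finset.univ.val.map d := by
  have h1 : charmatrix (Matrix.diagonal d) = Matrix.diagonal (fun i => (X : ℝ[X]) - C (d i)) := by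
    refine Matrix.ext fun i j => ?_
    by_cases hij : i = j
    · subst hij; rw [charmatrix_apply_eq, Matrix.diagonal_apply_eq, Matrix.diagonal_apply_eq]
    · rw [charmatrix_apply_ne _ _ _ hij, Matrix.diagonal_apply_ne _ hij,
        Matrix.diagonal_apply_ne _ hij, map_zero, neg_zero]
  rw [Matrix.charpoly, h1, Matrix.det_diagonal]
  have h2 : ∏ i, ((X : ℝ[X]) - C (d i))
      = ((Finset.univ.val.map d).map (fun a => X - C a)).prod := by
    rw [Multiset.map_map]; rfl
  rw [h2, Polynomial.roots_multiset_prod_X_sub_C]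

theorem neps_symmetric_spectrum (k : ℕ) (nn : Fin k → ℕ)
    (A : (i : Fin k) → Matrix (Fin (nn i)) (Fin (nn i)) ℝ)
    (hsym : ∀ i, (A i).IsSymm)
    (B : Finset (Fin k → Bool))
    (neg : Fin k → Fin k)
    (hneg : ∀ i, (A (neg i)).charpoly.roots
      = Multiset.map (fun x : ℝ => -x) (A i).charpoly.roots)
    (hneguniq : ∀ i j, (A j).charpoly.roots
      = Multiset.map (fun x : ℝ => -x) (A i).charpoly.roots → j = neg i)
    (hcompat : ∀ β ∈ B, ∃! β' : Fin k → Bool, β' ∈ B ∧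
      ∀ j, β' j = true ↔ ∃ i, β i = true ∧ neg i = j)
    (hodd : ∀ x : Fin k → ℝ,
      (∑ β ∈ B, ∏ i, (if β i then -x i else 1))
        = -(∑ β ∈ B, ∏ i, (if β i then x i else 1)))
    (M : Matrix ((i : Fin k) → Fin (nn i)) ((i : Fin k) → Fin (nn i)) ℝ)
    (hM : ∀ u v, M u v = ∑ β ∈ B, ∏ i,
      (if β i then A i (u i) (v i) else if u i = v i then (1:ℝ) else 0)) :
    ∀ lam : ℝ, Multiset.count (-lam) M.charpoly.roots
      = Multiset.count lam M.charpoly.roots := by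
  classical
  -- Hermitian structure and diagonalization data
  have hH : ∀ i, (A i).IsHermitian := fun i => by
    rw [Matrix.IsHermitian, Matrix.conjTranspose_eq_transpose_of_trivial]; exact hsym i
  set d : ∀ i, Fin (nn i) → ℝ := fun i => (hH i).eigenvalues with hd
  set U : ∀ i, Matrix (Fin (nn i)) (Fin (nn i)) ℝ :=
    fun i => (((hH i).eigenvectorUnitary : Matrix (Fin (nn i)) (Fin (nn i)) ℝ)) with hU
  set Vm : ∀ i, Matrix (Fin (nn i)) (Fin (nn i)) ℝ := fun i => star (U i) with hVm
  have hUV : ∀ i, U i * Vm i = 1 := fun i =>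
    Matrix.mem_unitaryGroup_iff.mp ((hH i).eigenvectorUnitary).2
  have hVU : ∀ i, Vm i * U i = 1 := fun i =>
    Matrix.mem_unitaryGroup_iff'.mp ((hH i).eigenvectorUnitary).2
  have hA' : ∀ i, A i = U i * Matrix.diagonal (d i) * Vm i := fun i => by
    simpa using (hH i).spectral_theorem
  have hrootsA : ∀ i, (A i).charpoly.roots = Finset.univ.val.map (d i) := by
    intro i
    rw [hA' i, charpoly_conj_aux _ _ _ (hUV i), roots_charpoly_diagonal]
  -- Kronecker-style similarity for M
  set P : ((i : Fin k) → Fin (nn i)) → ℝ :=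
    fun w => ∑ β ∈ B, ∏ i, (if β i then d i (w i) else 1) with hP
  set S : Matrix ((i : Fin k) → Fin (nn i)) ((i : Fin k) → Fin (nn i)) ℝ :=
    Matrix.of (fun u w => ∏ i, U i (u i) (w i)) with hS
  set T : Matrix ((i : Fin k) → Fin (nn i)) ((i : Fin k) → Fin (nn i)) ℝ :=
    Matrix.of (fun w v => ∏ i, Vm i (w i) (v i)) with hT
  have hST : S * T = 1 := by
    refine Matrix.ext fun u v => ?_
    rw [Matrix.mul_apply, Matrix.one_apply]
    have h1 : ∀ w, S u w * T w v = ∏ i, (U i (u i) (w i) * Vm i (w i) (v i)) := by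
      intro w; rw [Finset.prod_mul_distrib]; rfl
    rw [Finset.sum_congr rfl (fun w _ => h1 w),
      ← Fintype.prod_sum (fun i m => U i (u i) m * Vm i m (v i))]
    have h2 : ∀ i, (∑ m, U i (u i) m * Vm i m (v i))
        = if u i = v i then (1:ℝ) else 0 := by
      intro i; rw [← Matrix.mul_apply, hUV i, Matrix.one_apply]
    rw [Finset.prod_congr rfl (fun i _ => h2 i), Finset.prod_boole]
    have hiff : (∀ i ∈ Finset.univ, u i = v i) ↔ u = v := by
      constructor
      · intro h; funext i; exact h i (Finset.mem_univ i)
      · intro h i _; rw [h]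
    simp only [hiff]
  have hTS : T * S = 1 := by
    refine Matrix.ext fun u v => ?_
    rw [Matrix.mul_apply, Matrix.one_apply]
    have h1 : ∀ w, T u w * S w v = ∏ i, (Vm i (u i) (w i) * U i (w i) (v i)) := by
      intro w; rw [Finset.prod_mul_distrib]; rfl
    rw [Finset.sum_congr rfl (fun w _ => h1 w),
      ← Fintype.prod_sum (fun i m => Vm i (u i) m * U i m (v i))]
    have h2 : ∀ i, (∑ m, Vm i (u i) m * U i m (v i))
        = if u i = v i then (1:ℝ) else 0 := by
      intro i; rw [← Matrix.mul_apply, hVU i, Matrix.one_apply]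
    rw [Finset.prod_congr rfl (fun i _ => h2 i), Finset.prod_boole]
    have hiff : (∀ i ∈ Finset.univ, u i = v i) ↔ u = v := by
      constructor
      · intro h; funext i; exact h i (Finset.mem_univ i)
      · intro h i _; rw [h]
    simp only [hiff]
  have hAU : ∀ i, A i * U i = U i * Matrix.diagonal (d i) := by
    intro i
    rw [hA' i, Matrix.mul_assoc (U i * Matrix.diagonal (d i)) (Vm i) (U i), hVU i, Matrix.mul_one]
  have hMS : M * S = S * Matrix.diagonal P := by
    refine Matrix.ext fun u w => ?_
    rw [Matrix.mul_apply]
    have step1 : ∀ v, M u v * S v w = ∑ β ∈ B, ∏ i,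
        ((if β i then A i (u i) (v i) else if u i = v i then (1:ℝ) else 0) * U i (v i) (w i)) := by
      intro v
      rw [hM, Finset.sum_mul]
      refine Finset.sum_congr rfl fun β _ => ?_
      rw [Finset.prod_mul_distrib]; rfl
    rw [Finset.sum_congr rfl (fun v _ => step1 v), Finset.sum_comm]
    have step2 : ∀ β ∈ B, (∑ v : (i : Fin k) → Fin (nn i), ∏ i,
        ((if β i then A i (u i) (v i) else if u i = v i then (1:ℝ) else 0) * U i (v i) (w i)))
        = S u w * ∏ i, (if β i then d i (w i) else 1) := by
      intro β _
      rw [← Fintype.prod_sum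
        (fun i m => (if β i then A i (u i) m else if u i = m then (1:ℝ) else 0) * U i m (w i))]
      have h3 : ∀ i, (∑ m, (if β i then A i (u i) m else if u i = m then (1:ℝ) else 0) * U i m (w i))
          = U i (u i) (w i) * (if β i then d i (w i) else 1) := by
        intro i
        by_cases hb : β i = true
        · simp only [hb, if_true]
          rw [← Matrix.mul_apply, hAU i, Matrix.mul_diagonal]
        · simp [hb, ite_mul]
      rw [Finset.prod_congr rfl (fun i _ => h3 i), Finset.prod_mul_distrib]
      rfl
    rw [Finset.sum_congr rfl step2, ← Finset.mul_sum, Matrix.mul_diagonal]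
  have hMeq : M = S * Matrix.diagonal P * T := by
    calc M = M * (S * T) := by rw [hST, Matrix.mul_one]
    _ = (M * S) * T := by rw [Matrix.mul_assoc]
    _ = S * Matrix.diagonal P * T := by rw [hMS]
  have hrootsM : M.charpoly.roots = Finset.univ.val.map P := by
    rw [hMeq, charpoly_conj_aux _ _ _ hST, roots_charpoly_diagonal]
  -- the negation map is an involution
  have hinv : ∀ i, neg (neg i) = i := by
    intro i
    have h1 : (A i).charpoly.roots
        = Multiset.map (fun x : ℝ => -x) (A (neg i)).charpoly.roots := by
      rw [hneg i, Multiset.map_map]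
      simp
    exact (hneguniq (neg i) i h1).symm
  -- B is closed under reindexing by neg
  have hBneg : ∀ β ∈ B, (fun j => β (neg j)) ∈ B := by
    intro β hβ
    obtain ⟨β', ⟨hβ'B, hβ'⟩, -⟩ := hcompat β hβ
    have hββ' : β' = fun j => β (neg j) := by
      funext j
      have h2 : (∃ i, β i = true ∧ neg i = j) ↔ β (neg j) = true := by
        constructor
        · rintro ⟨i, hi, rfl⟩; rwa [hinv]
        · intro h; exact ⟨neg j, h, hinv j⟩
      have h3 := (hβ' j).trans h2
      exact Bool.eq_iff_iff.mpr h3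
    rw [← hββ']; exact hβ'B
  -- coordinatewise spectra relation
  have hde : ∀ j, Finset.univ.val.map (fun m : Fin (nn (neg j)) => -(d (neg j) m))
      = Finset.univ.val.map (d j) := by
    intro j
    have h1 := hneg j
    rw [hrootsA, hrootsA] at h1
    calc Finset.univ.val.map (fun m : Fin (nn (neg j)) => -(d (neg j) m))
        = Multiset.map (fun x : ℝ => -x) (Finset.univ.val.map (d (neg j))) := by
          rw [Multiset.map_map]; rfl
    _ = Multiset.map (fun x : ℝ => -x)
          (Multiset.map (fun x : ℝ => -x) (Finset.univ.val.map (d j))) := by rw [h1]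
    _ = Finset.univ.val.map (d j) := by
          simp only [Multiset.map_map]
          refine Multiset.map_congr rfl fun m _ => ?_
          simp
  -- oddness and reindexing: -(P w) in reindexed form
  have hPneg : ∀ w : (i : Fin k) → Fin (nn i), -(P w)
      = ∑ β ∈ B, ∏ j, (if β j then -(d (neg j) (w (neg j))) else 1) := by
    intro w
    calc -(P w) = ∑ β ∈ B, ∏ i, (if β i then -(d i (w i)) else 1) :=
          (hodd (fun i => d i (w i))).symm
    _ = ∑ β ∈ B, ∏ i, (if β (neg i) then -(d i (w i)) else 1) := by
        refine Finset.sum_nbij' (fun β => fun j => β (neg j)) (fun β => fun j => β (neg j))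
          (fun β hβ => hBneg β hβ) (fun β hβ => hBneg β hβ) ?_ ?_ ?_
        · intro β _; funext j; show β (neg (neg j)) = β j; rw [hinv]
        · intro β _; funext j; show β (neg (neg j)) = β j; rw [hinv]
        · intro β _
          refine Finset.prod_congr rfl fun i _ => ?_
          show _ = (if β (neg (neg i)) = true then -(d i (w i)) else 1)
          rw [hinv]
    _ = ∑ β ∈ B, ∏ j, (if β j then -(d (neg j) (w (neg j))) else 1) := by
        refine Finset.sum_congr rfl fun β _ => ?_
        refine Fintype.prod_equiv (⟨neg, neg, hinv, hinv⟩ : Fin k ≃ Fin k)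
          (fun i => if β (neg i) then -(d i (w i)) else 1)
          (fun j => if β j then -(d (neg j) (w (neg j))) else 1) ?_
        intro i
        show _ = (if β (neg i) = true then -(d (neg (neg i)) (w (neg (neg i)))) else 1)
        rw [hinv i]
  -- the multiset of diagonal entries is symmetric under negation
  have hmap1 : (Finset.univ.val.map (fun w : (i : Fin k) → Fin (nn i) => -(P w)))
      = Finset.univ.val.map P := by
    have hEqv : Finset.univ.val.map
        (⇑(Equiv.piCongrLeft' (fun i => Fin (nn i)) (⟨neg, neg, hinv, hinv⟩ : Fin k ≃ Fin k)))
        = (Finset.univ.val : Multiset ((j : Fin k) → Fin (nn (neg j)))) :=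
      congrArg Finset.val (Finset.map_univ_equiv
        (Equiv.piCongrLeft' (fun i => Fin (nn i)) (⟨neg, neg, hinv, hinv⟩ : Fin k ≃ Fin k)))
    have e1 : (Finset.univ.val.map (fun w : (i : Fin k) → Fin (nn i) =>
        (fun j => -(d (neg j) (w (neg j))) : Fin k → ℝ)))
        = Finset.univ.val.map (fun v : (j : Fin k) → Fin (nn (neg j)) =>
            (fun j => -(d (neg j) (v j)) : Fin k → ℝ)) := by
      calc (Finset.univ.val.map (fun w : (i : Fin k) → Fin (nn i) =>
          (fun j => -(d (neg j) (w (neg j))) : Fin k → ℝ)))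
          = (Finset.univ.val.map
              (⇑(Equiv.piCongrLeft' (fun i => Fin (nn i))
                (⟨neg, neg, hinv, hinv⟩ : Fin k ≃ Fin k)))).map
              (fun v : (j : Fin k) → Fin (nn (neg j)) =>
                (fun j => -(d (neg j) (v j)) : Fin k → ℝ)) := by
            rw [Multiset.map_map]; rfl
      _ = _ := by rw [hEqv]
    have e2 : (Finset.univ.val.map (fun v : (j : Fin k) → Fin (nn (neg j)) =>
        (fun j => -(d (neg j) (v j)) : Fin k → ℝ)))
        = Finset.univ.val.map (fun w : (j : Fin k) → Fin (nn j) =>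
            (fun j => d j (w j) : Fin k → ℝ)) :=
      map_pi_univ_eq (fun j => fun m => -(d (neg j) m)) d hde
    calc Finset.univ.val.map (fun w : (i : Fin k) → Fin (nn i) => -(P w))
        = Finset.univ.val.map ((fun x : Fin k → ℝ => ∑ β ∈ B, ∏ j, (if β j then x j else 1))
            ∘ (fun w : (i : Fin k) → Fin (nn i) =>
              (fun j => -(d (neg j) (w (neg j))) : Fin k → ℝ))) := by
          refine Multiset.map_congr rfl fun w _ => ?_
          exact hPneg w
    _ = ((Finset.univ.val.map (fun w : (i : Fin k) → Fin (nn i) =>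
            (fun j => -(d (neg j) (w (neg j))) : Fin k → ℝ))).map
            (fun x : Fin k → ℝ => ∑ β ∈ B, ∏ j, (if β j then x j else 1))) := by
          rw [Multiset.map_map]
    _ = ((Finset.univ.val.map (fun w : (j : Fin k) → Fin (nn j) =>
            (fun j => d j (w j) : Fin k → ℝ))).map
            (fun x : Fin k → ℝ => ∑ β ∈ B, ∏ j, (if β j then x j else 1))) := by
          rw [e1, e2]
    _ = Finset.univ.val.map P := by rw [Multiset.map_map]; rfl
  -- conclusion
  intro lam
  rw [hrootsM]
  have h5 := Multiset.count_map_eq_count' (fun x : ℝ => -x)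
    (Finset.univ.val.map P) neg_injective (-lam)
  rw [neg_neg] at h5
  rw [← h5, Multiset.map_map]
  have hmap1' : Finset.univ.val.map ((fun x : ℝ => -x) ∘ P) = Finset.univ.val.map P := hmap1
  rw [hmap1']
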